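/- arXiv:1609.01631 — 3 statements merged into one kernel-verified Lean document; each statement's English description precedes it below -/
import Mathlib

section
/- Let (X,T) be a dynamical system on a compact metric space with T continuous. If there exists a fixed point p of T such that p belongs to the omega-limit set of every point x in X, then (X,T) is proximal, i.e., every pair of points x,y in X satisfies liminf_{n→∞} d(T^n x, T^n y) = 0. -/
open Filter

/-- The omega-limit set of `x` under iteration of `T`. -/
def omegaLimitSet {X : Type*} [MetricSpace X] (T : X → X) (x : X) : Set X :=
  ⋂ n : ℕ, closure {y | ∃ k ≥ n, T^[k] x = y}

lemma hit_aux {X : Type*} [MetricSpace X] (T : X → X) (p : X)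
    (hω : ∀ x : X, p ∈ omegaLimitSet T x) (z : X) {ε : ℝ} (hε : 0 < ε) (n : ℕ) :
    ∃ k ≥ n, dist (T^[k] z) p < ε := by
  have h2 : p ∈ closure {y | ∃ k ≥ n, T^[k] z = y} := by
    have := hω z
    simp only [omegaLimitSet, Set.mem_iInter] at this
    exact this n
  rcases Metric.mem_closure_iff.1 h2 ε hε with ⟨y, ⟨k, hk, rfl⟩, hd⟩
  exact ⟨k, hk, by rwa [dist_comm] at hd⟩

lemma uniform_hit {X : Type*} [MetricSpace X] [CompactSpace X] (T : X → X)
    (hT : Continuous T) (p : X)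
    (hω : ∀ x : X, p ∈ omegaLimitSet T x) {ε : ℝ} (hε : 0 < ε) :
    ∃ N : ℕ, ∀ z : X, ∃ k ≤ N, dist (T^[k] z) p < ε := by
  set U : ℕ → Set X := fun k => {z | dist (T^[k] z) p < ε} with hU
  have hUopen : ∀ k, IsOpen (U k) := fun k =>
    isOpen_lt (Continuous.dist (hT.iterate k) continuous_const) continuous_const
  have hcov : Set.univ ⊆ ⋃ k, U k := by
    intro z _
    rcases hit_aux T p hω z hε 0 with ⟨k, _, hk⟩
    exact Set.mem_iUnion.2 ⟨k, hk⟩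
  rcases isCompact_univ.elim_finite_subcover U hUopen hcov with ⟨s, hs⟩
  refine ⟨s.sup id, fun z => ?_⟩
  rcases Set.mem_iUnion₂.1 (hs (Set.mem_univ z)) with ⟨k, hk, hz⟩
  exact ⟨k, Finset.le_sup (f := id) hk, hz⟩

lemma iter_cont_at {X : Type*} [MetricSpace X] (T : X → X) (hT : Continuous T)
    (p : X) (hp : T p = p) {ε : ℝ} (hε : 0 < ε) (N : ℕ) :
    ∃ δ > 0, ∀ w : X, dist w p < δ → ∀ j ≤ N, dist (T^[j] w) p < ε := by
  induction N with
  | zero =>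
    exact ⟨ε, hε, fun w hw j hj => by simpa [Nat.le_zero.1 hj] using hw⟩
  | succ n ih =>
    obtain ⟨δ, hδpos, hδ⟩ := ih
    have hc : ContinuousAt (T^[n+1]) p := (hT.iterate (n+1)).continuousAt
    have hfix : T^[n+1] p = p := Function.iterate_fixed hp (n+1)
    rcases Metric.continuousAt_iff.1 hc ε hε with ⟨δ', hδ'pos, hδ'⟩
    refine ⟨min δ δ', lt_min hδpos hδ'pos, fun w hw j hj => ?_⟩
    rcases Nat.lt_succ_iff_lt_or_eq.1 (Nat.lt_succ_of_le hj) with h | h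
    · exact hδ w (lt_of_lt_of_le hw (min_le_left _ _)) j (Nat.lt_succ_iff.1 h)
    · subst h
      have := hδ' (lt_of_lt_of_le hw (min_le_right _ _))
      rwa [hfix] at this

/-- If a fixed point `p` belongs to the omega-limit set of every point,
then the system is proximal. -/
theorem fixed_point_in_all_omega_limits_implies_proximal
    {X : Type*} [MetricSpace X] [CompactSpace X]
    (T : X → X) (hT : Continuous T)
    (p : X) (hp : T p = p)
    (hω : ∀ x : X, p ∈ omegaLimitSet T x) :
    ∀ x y : X, Filter.liminf (fun n : ℕ => dist (T^[n] x) (T^[n] y)) atTop = 0 := by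
  intro x y
  set f : ℕ → ℝ := fun n => dist (T^[n] x) (T^[n] y) with hf
  -- frequently small
  have hfreq : ∀ ε > (0:ℝ), ∃ᶠ n in atTop, f n < ε := by
    intro ε hε
    have hε2 : 0 < ε / 2 := by linarith
    obtain ⟨N₁, hN₁⟩ := uniform_hit T hT p hω hε2
    obtain ⟨δ, hδpos, hδ⟩ := iter_cont_at T hT p hp hε2 N₁
    rw [frequently_atTop]
    intro n₀
    obtain ⟨k₂, hk₂n₀, hk₂⟩ := hit_aux T p hω x hδpos n₀
    obtain ⟨k₁, hk₁N₁, hk₁⟩ := hN₁ (T^[k₂] y)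
    refine ⟨k₂ + k₁, le_trans hk₂n₀ (Nat.le_add_right _ _), ?_⟩
    have hx : dist (T^[k₂ + k₁] x) p < ε / 2 := by
      have := hδ (T^[k₂] x) hk₂ k₁ hk₁N₁
      rwa [← Function.iterate_add_apply, Nat.add_comm k₁ k₂] at this
    have hy : dist (T^[k₂ + k₁] y) p < ε / 2 := by
      have := hk₁
      rwa [← Function.iterate_add_apply, Nat.add_comm k₁ k₂] at this
    calc f (k₂ + k₁) ≤ dist (T^[k₂ + k₁] x) p + dist p (T^[k₂ + k₁] y) := dist_triangle _ _ _
      _ < ε / 2 + ε / 2 := by rw [dist_comm p]; exact add_lt_add hx hy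
      _ = ε := by ring
  -- boundedness below
  have hbdd : IsBoundedUnder (· ≥ ·) atTop f :=
    Filter.isBoundedUnder_of ⟨0, fun n => dist_nonneg⟩
  refine le_antisymm ?_ ?_
  · refine le_of_forall_pos_le_add fun ε hε => ?_
    have := Filter.liminf_le_of_frequently_le
      ((hfreq ε hε).mono fun n hn => le_of_lt hn) hbdd
    linarith
  · have hbdd2 : IsBoundedUnder (· ≤ ·) atTop f :=
      Filter.isBoundedUnder_of ⟨Metric.diam Set.univ, fun n =>
        Metric.dist_le_diam_of_mem isCompact_univ.isBounded (Set.mem_univ _) (Set.mem_univ _)⟩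
    exact Filter.le_liminf_of_le hbdd2.isCoboundedUnder_ge
      (Filter.Eventually.of_forall fun n => dist_nonneg)
end

section
/- Let (X,T) be a proximal dynamical system on a nonempty compact metric space. Then T has a fixed point p, and {p} is the unique minimal subset of (X,T). -/
open Filter

/-- A system is proximal if every pair of points is proximal. -/
def ProximalSystem {X : Type*} [MetricSpace X] (T : X → X) : Prop :=
  ∀ x y : X, Filter.liminf (fun n : ℕ => dist (T^[n] x) (T^[n] y)) atTop = 0

/-- A minimal set: nonempty, closed, invariant, with no proper nonempty closed
invariant subset. -/
def IsMinimalSet {X : Type*} [TopologicalSpace X] (T : X → X) (M : Set X) : Prop :=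
  M.Nonempty ∧ IsClosed M ∧ T '' M ⊆ M ∧
    ∀ M' ⊆ M, M'.Nonempty → IsClosed M' → T '' M' ⊆ M' → M' = M

/-- In a compact proximal system, the closure of every forward orbit contains a fixed point. -/
lemma fixed_in_orbit_closure {X : Type*} [MetricSpace X] [CompactSpace X]
    (T : X → X) (hT : Continuous T) (h : ProximalSystem T) (x : X) :
    ∃ z : X, T z = z ∧ z ∈ closure (Set.range fun n : ℕ => T^[n] x) := by
  have hC : ∀ a b : X, dist a b ≤ Metric.diam (Set.univ : Set X) := fun a b =>
    Metric.dist_le_diam_of_mem isCompact_univ.isBounded (Set.mem_univ a) (Set.mem_univ b)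
  have hlim := h x (T x)
  have hcb : IsCoboundedUnder (· ≥ ·) atTop
      (fun n : ℕ => dist (T^[n] x) (T^[n] (T x))) :=
    isCoboundedUnder_ge_of_le atTop fun n => hC _ _
  have hfreq : ∀ k : ℕ, ∃ n : ℕ, dist (T^[n] x) (T^[n] (T x)) < 1 / (k + 1) := by
    intro k
    have : liminf (fun n : ℕ => dist (T^[n] x) (T^[n] (T x))) atTop < 1 / (k + 1) := by
      rw [hlim]; positivity
    exact (frequently_lt_of_liminf_lt hcb this).exists
  choose n hn using hfreq
  obtain ⟨z, φ, hφ, hz⟩ := CompactSpace.tendsto_subseq (fun k => T^[n k] x)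
  refine ⟨z, ?_, ?_⟩
  · have h1 : Tendsto (fun k => dist (T^[n (φ k)] x) (T (T^[n (φ k)] x))) atTop
        (nhds (dist z (T z))) := by
      exact ((continuous_id.dist hT).continuousAt (x := z)).tendsto.comp hz
    have h2 : Tendsto (fun k => dist (T^[n (φ k)] x) (T (T^[n (φ k)] x))) atTop (nhds 0) := by
      apply squeeze_zero (g := fun k : ℕ => 1 / (k + 1 : ℝ)) (fun k => dist_nonneg)
        (fun k => ?_) tendsto_one_div_add_atTop_nhds_zero_nat
      · have hk := hn (φ k)
        rw [← Function.iterate_succ_apply, Function.iterate_succ_apply'] at hk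
        show dist (T^[n (φ k)] x) (T (T^[n (φ k)] x)) ≤ 1 / (k + 1 : ℝ)
        calc dist (T^[n (φ k)] x) (T (T^[n (φ k)] x)) ≤ 1 / (φ k + 1) := le_of_lt hk
          _ ≤ 1 / (k + 1) := by
              apply one_div_le_one_div_of_le (by positivity)
              have hk' : (k : ℝ) ≤ (φ k : ℝ) := Nat.cast_le.mpr hφ.le_apply
              linarith
    have : dist z (T z) = 0 := tendsto_nhds_unique h1 h2
    exact (dist_eq_zero.mp this).symm
  · exact mem_closure_of_tendsto hz (Eventually.of_forall fun k => ⟨n (φ k), rfl⟩)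

/-- a proximal system has a fixed point `p`, and `{p}` is the
unique minimal subset. -/
theorem proximal_unique_minimal_fixed_point
    {X : Type*} [MetricSpace X] [CompactSpace X] [Nonempty X]
    (T : X → X) (hT : Continuous T) (h : ProximalSystem T) :
    ∃ p : X, T p = p ∧ ∀ M : Set X, IsMinimalSet T M → M = {p} := by
  obtain ⟨p, hp, -⟩ := fixed_in_orbit_closure T hT h (Classical.arbitrary X)
  refine ⟨p, hp, fun M hM => ?_⟩
  obtain ⟨⟨x, hx⟩, hMc, hMi, hMm⟩ := hM
  obtain ⟨z, hz, hzmem⟩ := fixed_in_orbit_closure T hT h x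
  have horb : ∀ n : ℕ, T^[n] x ∈ M := by
    intro n; induction n with
    | zero => exact hx
    | succ k ih => rw [Function.iterate_succ_apply']; exact hMi ⟨_, ih, rfl⟩
  have hzM : z ∈ M := by
    have : closure (Set.range fun n : ℕ => T^[n] x) ⊆ M :=
      closure_minimal (Set.range_subset_iff.mpr horb) hMc
    exact this hzmem
  have hsing : ({z} : Set X) = M :=
    hMm {z} (Set.singleton_subset_iff.mpr hzM) ⟨z, rfl⟩ isClosed_singleton
      (by rintro y ⟨a, rfl, rfl⟩; simp [hz])
  have hzp : z = p := by
    have := h z p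
    simp only [Function.iterate_fixed hz, Function.iterate_fixed hp, liminf_const] at this
    exact dist_eq_zero.mp this
  rw [← hsing, hzp]
end

section
/- Let G = ⟨φ_i⟩ be a sequence of graph homomorphisms φ_i: (V_{i+1}, E_{i+1}) → (V_i, E_i) between finite directed graphs, where each graph is edge-surjective (every vertex has an incoming and an outgoing edge) and each φ_i is bidirectional. Let V_G = {x ∈ ∏_{i≥0} V_i : φ_i(x_{i+1}) = x_i for all i} with the product topology (each V_i discrete), and let E_G = {(x,y) ∈ V_G × V_G : (x_i, y_i) ∈ E_i for all i}. Then V_G is a compact metrizable zero-dimensional (totally disconnected) space and the relation E_G is the graph of a homeomorphism of V_G. -/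
/-- the inverse limit of a sequence of bidirectional covers of
edge-surjective finite graphs is a compact metrizable zero-dimensional space,
and the induced edge relation is the graph of a homeomorphism. -/
theorem graph_cover_inverse_limit
    (V : ℕ → Type) [∀ i, Fintype (V i)]
    [∀ i, TopologicalSpace (V i)] [∀ i, DiscreteTopology (V i)]
    (E : ∀ i, Set (V i × V i))
    -- edge-surjectivity: every vertex has an incoming and an outgoing edge
    (hes : ∀ i, ∀ v : V i, (∃ u, (u, v) ∈ E i) ∧ (∃ w, (v, w) ∈ E i))
    (φ : ∀ i, V (i + 1) → V i)
    -- each φ i is a graph homomorphism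
    (hhom : ∀ i, ∀ u v : V (i + 1), (u, v) ∈ E (i + 1) → (φ i u, φ i v) ∈ E i)
    -- bidirectionality
    (hbd₁ : ∀ i, ∀ u v v' : V (i + 1), (u, v) ∈ E (i + 1) → (u, v') ∈ E (i + 1) →
      φ i v = φ i v')
    (hbd₂ : ∀ i, ∀ w w' u : V (i + 1), (w, u) ∈ E (i + 1) → (w', u) ∈ E (i + 1) →
      φ i w = φ i w') :
    CompactSpace {x : ∀ i, V i // ∀ i, φ i (x (i + 1)) = x i} ∧
    TopologicalSpace.MetrizableSpace {x : ∀ i, V i // ∀ i, φ i (x (i + 1)) = x i} ∧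
    TotallyDisconnectedSpace {x : ∀ i, V i // ∀ i, φ i (x (i + 1)) = x i} ∧
    ∃ h : {x : ∀ i, V i // ∀ i, φ i (x (i + 1)) = x i} ≃ₜ
          {x : ∀ i, V i // ∀ i, φ i (x (i + 1)) = x i},
      ∀ x y : {x : ∀ i, V i // ∀ i, φ i (x (i + 1)) = x i},
        (∀ i, (x.1 i, y.1 i) ∈ E i) ↔ h x = y := by
  classical
  set S := {x : ∀ i, V i // ∀ i, φ i (x (i + 1)) = x i} with hS
  -- successor and predecessor choice functions
  have Fex : ∀ i (v : V (i + 1)), ∃ w, (v, w) ∈ E (i + 1) := fun i v => (hes (i + 1) v).2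
  have Pex : ∀ i (v : V (i + 1)), ∃ u, (u, v) ∈ E (i + 1) := fun i v => (hes (i + 1) v).1
  let F : ∀ i, V (i + 1) → V (i + 1) := fun i v => (Fex i v).choose
  let P : ∀ i, V (i + 1) → V (i + 1) := fun i v => (Pex i v).choose
  have hF : ∀ i (v : V (i + 1)), (v, F i v) ∈ E (i + 1) := fun i v => (Fex i v).choose_spec
  have hP : ∀ i (v : V (i + 1)), (P i v, v) ∈ E (i + 1) := fun i v => (Pex i v).choose_spec
  -- forward and backward maps on sequences
  let f : (∀ i, V i) → ∀ i, V i := fun x i => φ i (F i (x (i + 1)))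
  let g : (∀ i, V i) → ∀ i, V i := fun y i => φ i (P i (y (i + 1)))
  have hfE : ∀ x : S, ∀ i, (x.1 i, f x.1 i) ∈ E i := by
    intro x i
    have := hhom i _ _ (hF i (x.1 (i + 1)))
    rwa [x.2 i] at this
  have hgE : ∀ y : S, ∀ i, (g y.1 i, y.1 i) ∈ E i := by
    intro y i
    have := hhom i _ _ (hP i (y.1 (i + 1)))
    rwa [y.2 i] at this
  have hfS : ∀ x : S, ∀ i, φ i (f x.1 (i + 1)) = f x.1 i := by
    intro x i
    have h1 : (x.1 (i + 1), φ (i + 1) (F (i + 1) (x.1 (i + 2)))) ∈ E (i + 1) := by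
      have := hhom (i + 1) _ _ (hF (i + 1) (x.1 (i + 2)))
      rwa [x.2 (i + 1)] at this
    exact hbd₁ i _ _ _ h1 (hF i (x.1 (i + 1)))
  have hgS : ∀ y : S, ∀ i, φ i (g y.1 (i + 1)) = g y.1 i := by
    intro y i
    have h1 : (φ (i + 1) (P (i + 1) (y.1 (i + 2))), y.1 (i + 1)) ∈ E (i + 1) := by
      have := hhom (i + 1) _ _ (hP (i + 1) (y.1 (i + 2)))
      rwa [y.2 (i + 1)] at this
    exact hbd₂ i _ _ _ h1 (hP i (y.1 (i + 1)))
  -- uniqueness: if (x i, y i) ∈ E i for all i, then y = f x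
  have huniq : ∀ x y : S, (∀ i, (x.1 i, y.1 i) ∈ E i) → ∀ i, f x.1 i = y.1 i := by
    intro x y hE i
    have h2 := hbd₁ i _ _ _ (hF i (x.1 (i + 1))) (hE (i + 1))
    show φ i (F i (x.1 (i + 1))) = y.1 i
    rw [h2, y.2 i]
  -- the maps on S
  let f' : S → S := fun x => ⟨f x.1, hfS x⟩
  let g' : S → S := fun y => ⟨g y.1, hgS y⟩
  have hgf : ∀ x : S, g' (f' x) = x := by
    intro x
    apply Subtype.ext
    funext i
    have h1 : (x.1 (i + 1), f x.1 (i + 1)) ∈ E (i + 1) := hfE x (i + 1)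
    have := hbd₂ i _ _ _ (hP i (f x.1 (i + 1))) h1
    show φ i (P i (f x.1 (i + 1))) = x.1 i
    rw [this, x.2 i]
  have hfg : ∀ y : S, f' (g' y) = y := by
    intro y
    apply Subtype.ext
    funext i
    exact huniq (g' y) y (hgE y) i
  -- continuity
  have hcont_f : Continuous f' := by
    apply Continuous.subtype_mk
    apply continuous_pi
    intro i
    exact (continuous_of_discreteTopology
      (f := fun v : V (i + 1) => φ i (F i v))).comp
      ((continuous_apply (i + 1)).comp continuous_subtype_val)
  have hcont_g : Continuous g' := by
    apply Continuous.subtype_mk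
    apply continuous_pi
    intro i
    exact (continuous_of_discreteTopology
      (f := fun v : V (i + 1) => φ i (P i v))).comp
      ((continuous_apply (i + 1)).comp continuous_subtype_val)
  let H : S ≃ₜ S :=
    { toFun := f'
      invFun := g'
      left_inv := hgf
      right_inv := hfg
      continuous_toFun := hcont_f
      continuous_invFun := hcont_g }
  -- topological properties
  have hclosed : IsClosed {x : ∀ i, V i | ∀ i, φ i (x (i + 1)) = x i} := by
    have : {x : ∀ i, V i | ∀ i, φ i (x (i + 1)) = x i} =
        ⋂ i, {x : ∀ i, V i | φ i (x (i + 1)) = x i} := by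
      ext x; simp
    rw [this]
    refine isClosed_iInter fun i => isClosed_eq ?_ (continuous_apply i)
    exact (continuous_of_discreteTopology (f := φ i)).comp (continuous_apply (i + 1))
  haveI : ∀ i, CompactSpace (V i) := fun i => Finite.compactSpace
  haveI : CompactSpace S := isCompact_iff_compactSpace.mp hclosed.isCompact
  haveI : TopologicalSpace.MetrizableSpace (∀ i, V i) := inferInstance
  haveI : TopologicalSpace.MetrizableSpace S :=
    TopologicalSpace.MetrizableSpace.subtype {x : ∀ i, V i | ∀ i, φ i (x (i + 1)) = x i}
  refine ⟨inferInstance, inferInstance, inferInstance, H, ?_⟩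
  intro x y
  constructor
  · intro hE
    exact Subtype.ext (funext (huniq x y hE))
  · intro he
    subst he
    exact hfE x
end
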